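/- Let Q be the 6×6 matrix over ℂ with rows (indexed 0–5): row 0 = (1,−1,1,1,−1,1), row 1 = (−1,1,−1,1,1,1), row 2 = (1,−1,1,−1,1,1), row 3 = (1,1,−1,1,−1,1), row 4 = (−1,1,1,−1,1,1), row 5 = (1,1,1,1,1,1). Then Q is a quantum matrix of size 6, C_Q = ℬ = {{0,1,3},{0,1,5},{0,2,4},{0,4,5},{0,2,3},{1,2,4},{1,2,5},{1,3,4},{2,3,5},{3,4,5}}, and the point cone V_Q equals the union of the ten coordinate subspaces L_T for T ∈ {{0,1,2},{1,2,3},{2,3,4},{0,3,4},{0,1,4},{0,2,5},{1,3,5},{2,4,5},{0,3,5},{1,4,5}}. -/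

import Mathlib

/-- A quantum matrix of size `m`: all entries nonzero, diagonal entries `1`,
and `Q i j * Q j i = 1` for all `i, j`. -/
def IsQuantumMatrix {m : ℕ} (Q : Matrix (Fin m) (Fin m) ℂ) : Prop :=
  (∀ i j, Q i j ≠ 0) ∧ (∀ i, Q i i = 1) ∧ (∀ i j, Q i j * Q j i = 1)

/-- The point cone of a quantum matrix `Q`. -/
def pointCone {m : ℕ} (Q : Matrix (Fin m) (Fin m) ℂ) : Set (Fin m → ℂ) :=
  {u | u ≠ 0 ∧ ∀ i j k : Fin m, i < j → j < k →
    (Q i j * Q j k - Q i k) * u i * u j * u k = 0}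

/-- The (punctured) coordinate subspace of `ℂ^m` supported on `S`. -/
def coordSubspace {m : ℕ} (S : Set (Fin m)) : Set (Fin m → ℂ) :=
  {u | u ≠ 0 ∧ ∀ i, i ∉ S → u i = 0}



@[simp] lemma cons_val_five' {α} {m : ℕ} (x : α) (u : Fin (m+5) → α) :
    Matrix.vecCons x u 5 =
      Matrix.vecHead (Matrix.vecTail (Matrix.vecTail (Matrix.vecTail (Matrix.vecTail u)))) := rfl

def M0 : Matrix (Fin 6) (Fin 6) ℂ := !![1,-1,1,1,-1,1; -1,1,-1,1,1,1; 1,-1,1,-1,1,1;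
      1,1,-1,1,-1,1; -1,1,1,-1,1,1; 1,1,1,1,1,1]

set_option maxHeartbeats 1000000 in
lemma cond_iff (u : Fin 6 → ℂ) :
    (∀ i j k : Fin 6, i < j → j < k → (M0 i j * M0 j k - M0 i k) * u i * u j * u k = 0) ↔
    (u 0 * u 1 * u 3 = 0 ∧ u 0 * u 1 * u 5 = 0 ∧ u 0 * u 2 * u 4 = 0 ∧
     u 0 * u 4 * u 5 = 0 ∧ u 0 * u 2 * u 3 = 0 ∧ u 1 * u 2 * u 4 = 0 ∧
     u 1 * u 2 * u 5 = 0 ∧ u 1 * u 3 * u 4 = 0 ∧ u 2 * u 3 * u 5 = 0 ∧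
     u 3 * u 4 * u 5 = 0) := by
  constructor
  · intro h
    refine ⟨?_,?_,?_,?_,?_,?_,?_,?_,?_,?_⟩
    · have := h 0 1 3 (by decide) (by decide)
      simp only [M0, Matrix.of_apply, Matrix.cons_val] at this
      norm_num [M0, Matrix.vecHead, Matrix.vecTail, mul_assoc] at this
      rcases this with h|h|h <;> simp [h]
    · have := h 0 1 5 (by decide) (by decide)
      simp only [M0, Matrix.of_apply, Matrix.cons_val] at this
      norm_num [M0, Matrix.vecHead, Matrix.vecTail, mul_assoc] at this
      rcases this with h|h|h <;> simp [h]
    · have := h 0 2 4 (by decide) (by decide)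
      simp only [M0, Matrix.of_apply, Matrix.cons_val] at this
      norm_num [M0, Matrix.vecHead, Matrix.vecTail, mul_assoc] at this
      rcases this with h|h|h <;> simp [h]
    · have := h 0 4 5 (by decide) (by decide)
      simp only [M0, Matrix.of_apply, Matrix.cons_val] at this
      norm_num [M0, Matrix.vecHead, Matrix.vecTail, mul_assoc] at this
      rcases this with h|h|h <;> simp [h]
    · have := h 0 2 3 (by decide) (by decide)
      simp only [M0, Matrix.of_apply, Matrix.cons_val] at this
      norm_num [M0, Matrix.vecHead, Matrix.vecTail, mul_assoc] at this
      rcases this with h|h|h <;> simp [h]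
    · have := h 1 2 4 (by decide) (by decide)
      simp only [M0, Matrix.of_apply, Matrix.cons_val] at this
      norm_num [M0, Matrix.vecHead, Matrix.vecTail, mul_assoc] at this
      rcases this with h|h|h <;> simp [h]
    · have := h 1 2 5 (by decide) (by decide)
      simp only [M0, Matrix.of_apply, Matrix.cons_val] at this
      norm_num [M0, Matrix.vecHead, Matrix.vecTail, mul_assoc] at this
      rcases this with h|h|h <;> simp [h]
    · have := h 1 3 4 (by decide) (by decide)
      simp only [M0, Matrix.of_apply, Matrix.cons_val] at this
      norm_num [M0, Matrix.vecHead, Matrix.vecTail, mul_assoc] at this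
      rcases this with h|h|h <;> simp [h]
    · have := h 2 3 5 (by decide) (by decide)
      simp only [M0, Matrix.of_apply, Matrix.cons_val] at this
      norm_num [M0, Matrix.vecHead, Matrix.vecTail, mul_assoc] at this
      rcases this with h|h|h <;> simp [h]
    · have := h 3 4 5 (by decide) (by decide)
      simp only [M0, Matrix.of_apply, Matrix.cons_val] at this
      norm_num [M0, Matrix.vecHead, Matrix.vecTail, mul_assoc] at this
      rcases this with h|h|h <;> simp [h]
  · rintro ⟨h1,h2,h3,h4,h5,h6,h7,h8,h9,h10⟩ i j k hij hjk
    simp only [mul_eq_zero] at h1 h2 h3 h4 h5 h6 h7 h8 h9 h10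
    simp only [mul_eq_zero, or_assoc] at h1 h2 h3 h4 h5 h6 h7 h8 h9 h10
    obtain ⟨iv, hi⟩ := i; obtain ⟨jv, hj⟩ := j; obtain ⟨kv, hk⟩ := k
    simp only [Fin.mk_lt_mk] at hij hjk
    interval_cases kv <;> interval_cases jv <;> interval_cases iv <;>
      norm_num [M0, Matrix.vecHead, Matrix.vecTail, mul_eq_zero, or_assoc]
    all_goals first
      | exact h1 | exact h2 | exact h3 | exact h4 | exact h5
      | exact h6 | exact h7 | exact h8 | exact h9 | exact h10

lemma comb (z : Fin 6 → Bool)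
    (h1 : (z 0 || z 1 || z 3) = true)
    (h2 : (z 0 || z 1 || z 5) = true)
    (h3 : (z 0 || z 2 || z 4) = true)
    (h4 : (z 0 || z 4 || z 5) = true)
    (h5 : (z 0 || z 2 || z 3) = true)
    (h6 : (z 1 || z 2 || z 4) = true)
    (h7 : (z 1 || z 2 || z 5) = true)
    (h8 : (z 1 || z 3 || z 4) = true)
    (h9 : (z 2 || z 3 || z 5) = true)
    (h10 : (z 3 || z 4 || z 5) = true) :
    ((z 3 && z 4 && z 5) ||
     (z 0 && z 4 && z 5) ||
     (z 0 && z 1 && z 5) ||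
     (z 1 && z 2 && z 5) ||
     (z 2 && z 3 && z 5) ||
     (z 1 && z 3 && z 4) ||
     (z 0 && z 2 && z 4) ||
     (z 0 && z 1 && z 3) ||
     (z 1 && z 2 && z 4) ||
     (z 0 && z 2 && z 3)) = true := by
  revert h1 h2 h3 h4 h5 h6 h7 h8 h9 h10
  revert z; decide

set_option maxHeartbeats 4000000 in
theorem stmt_16 (Q : Matrix (Fin 6) (Fin 6) ℂ)
    (hQdef : Q = !![1,-1,1,1,-1,1; -1,1,-1,1,1,1; 1,-1,1,-1,1,1;
      1,1,-1,1,-1,1; -1,1,1,-1,1,1; 1,1,1,1,1,1]) :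
    IsQuantumMatrix Q ∧
    (∀ i j k : Fin 6, i < j → j < k →
      (({i, j, k} : Finset (Fin 6)) ∈
          ({{0,1,3},{0,1,5},{0,2,4},{0,4,5},{0,2,3},{1,2,4},{1,2,5},{1,3,4},
            {2,3,5},{3,4,5}} : Finset (Finset (Fin 6))) ↔
        Q i k ≠ Q i j * Q j k)) ∧
    pointCone Q =
      coordSubspace ({0,1,2} : Set (Fin 6)) ∪
      coordSubspace ({1,2,3} : Set (Fin 6)) ∪
      coordSubspace ({2,3,4} : Set (Fin 6)) ∪
      coordSubspace ({0,3,4} : Set (Fin 6)) ∪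
      coordSubspace ({0,1,4} : Set (Fin 6)) ∪
      coordSubspace ({0,2,5} : Set (Fin 6)) ∪
      coordSubspace ({1,3,5} : Set (Fin 6)) ∪
      coordSubspace ({2,4,5} : Set (Fin 6)) ∪
      coordSubspace ({0,3,5} : Set (Fin 6)) ∪
      coordSubspace ({1,4,5} : Set (Fin 6)) := by
  have hM : Q = M0 := hQdef
  subst hM
  refine ⟨⟨?_, ?_, ?_⟩, ?_, ?_⟩
  · intro i j
    fin_cases i <;> fin_cases j <;> norm_num [M0, Matrix.vecHead, Matrix.vecTail]
  · intro i
    fin_cases i <;> norm_num [M0, Matrix.vecHead, Matrix.vecTail]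
  · intro i j
    fin_cases i <;> fin_cases j <;> norm_num [M0, Matrix.vecHead, Matrix.vecTail]
  · intro i j k hij hjk
    fin_cases i <;> fin_cases j <;> fin_cases k <;>
      first
        | exact absurd hij (by decide)
        | exact absurd hjk (by decide)
        | exact iff_of_true (by decide) (by norm_num [M0, Matrix.vecHead, Matrix.vecTail])
        | exact iff_of_false (by decide)
            (fun hne => hne (by norm_num [M0, Matrix.vecHead, Matrix.vecTail]))
  · ext u
    simp only [Set.mem_union]
    constructor
    · rintro ⟨hne, h⟩
      obtain ⟨p1,p2,p3,p4,p5,p6,p7,p8,p9,p10⟩ := (cond_iff u).mp h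
      classical
      set z : Fin 6 → Bool := fun i => decide (u i = 0) with hz
      have e1 : (z 0 || z 1 || z 3) = true := by
        rw [mul_eq_zero, mul_eq_zero] at p1
        simp only [z, Bool.or_eq_true, decide_eq_true_iff]; tauto
      have e2 : (z 0 || z 1 || z 5) = true := by
        rw [mul_eq_zero, mul_eq_zero] at p2
        simp only [z, Bool.or_eq_true, decide_eq_true_iff]; tauto
      have e3 : (z 0 || z 2 || z 4) = true := by
        rw [mul_eq_zero, mul_eq_zero] at p3
        simp only [z, Bool.or_eq_true, decide_eq_true_iff]; tauto
      have e4 : (z 0 || z 4 || z 5) = true := by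
        rw [mul_eq_zero, mul_eq_zero] at p4
        simp only [z, Bool.or_eq_true, decide_eq_true_iff]; tauto
      have e5 : (z 0 || z 2 || z 3) = true := by
        rw [mul_eq_zero, mul_eq_zero] at p5
        simp only [z, Bool.or_eq_true, decide_eq_true_iff]; tauto
      have e6 : (z 1 || z 2 || z 4) = true := by
        rw [mul_eq_zero, mul_eq_zero] at p6
        simp only [z, Bool.or_eq_true, decide_eq_true_iff]; tauto
      have e7 : (z 1 || z 2 || z 5) = true := by
        rw [mul_eq_zero, mul_eq_zero] at p7
        simp only [z, Bool.or_eq_true, decide_eq_true_iff]; tauto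
      have e8 : (z 1 || z 3 || z 4) = true := by
        rw [mul_eq_zero, mul_eq_zero] at p8
        simp only [z, Bool.or_eq_true, decide_eq_true_iff]; tauto
      have e9 : (z 2 || z 3 || z 5) = true := by
        rw [mul_eq_zero, mul_eq_zero] at p9
        simp only [z, Bool.or_eq_true, decide_eq_true_iff]; tauto
      have e10 : (z 3 || z 4 || z 5) = true := by
        rw [mul_eq_zero, mul_eq_zero] at p10
        simp only [z, Bool.or_eq_true, decide_eq_true_iff]; tauto
      have bc := comb z e1 e2 e3 e4 e5 e6 e7 e8 e9 e10
      simp only [z, Bool.or_eq_true, Bool.and_eq_true, decide_eq_true_iff] at bc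
      obtain ((((((((bc|bc)|bc)|bc)|bc)|bc)|bc)|bc)|bc)|bc := bc
      · obtain ⟨⟨za, zb⟩, zc⟩ := bc
        exact Or.inl (Or.inl (Or.inl (Or.inl (Or.inl (Or.inl (Or.inl (Or.inl (Or.inl (⟨hne, by intro t ht; fin_cases t <;> simp_all [Set.mem_insert_iff, Set.mem_singleton_iff]⟩)))))))))
      · obtain ⟨⟨za, zb⟩, zc⟩ := bc
        exact Or.inl (Or.inl (Or.inl (Or.inl (Or.inl (Or.inl (Or.inl (Or.inl (Or.inr (⟨hne, by intro t ht; fin_cases t <;> simp_all [Set.mem_insert_iff, Set.mem_singleton_iff]⟩)))))))))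
      · obtain ⟨⟨za, zb⟩, zc⟩ := bc
        exact Or.inl (Or.inl (Or.inl (Or.inl (Or.inl (Or.inl (Or.inl (Or.inr (⟨hne, by intro t ht; fin_cases t <;> simp_all [Set.mem_insert_iff, Set.mem_singleton_iff]⟩))))))))
      · obtain ⟨⟨za, zb⟩, zc⟩ := bc
        exact Or.inl (Or.inl (Or.inl (Or.inl (Or.inl (Or.inl (Or.inr (⟨hne, by intro t ht; fin_cases t <;> simp_all [Set.mem_insert_iff, Set.mem_singleton_iff]⟩)))))))
      · obtain ⟨⟨za, zb⟩, zc⟩ := bc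
        exact Or.inl (Or.inl (Or.inl (Or.inl (Or.inl (Or.inr (⟨hne, by intro t ht; fin_cases t <;> simp_all [Set.mem_insert_iff, Set.mem_singleton_iff]⟩))))))
      · obtain ⟨⟨za, zb⟩, zc⟩ := bc
        exact Or.inl (Or.inl (Or.inl (Or.inl (Or.inr (⟨hne, by intro t ht; fin_cases t <;> simp_all [Set.mem_insert_iff, Set.mem_singleton_iff]⟩)))))
      · obtain ⟨⟨za, zb⟩, zc⟩ := bc
        exact Or.inl (Or.inl (Or.inl (Or.inr (⟨hne, by intro t ht; fin_cases t <;> simp_all [Set.mem_insert_iff, Set.mem_singleton_iff]⟩))))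
      · obtain ⟨⟨za, zb⟩, zc⟩ := bc
        exact Or.inl (Or.inl (Or.inr (⟨hne, by intro t ht; fin_cases t <;> simp_all [Set.mem_insert_iff, Set.mem_singleton_iff]⟩)))
      · obtain ⟨⟨za, zb⟩, zc⟩ := bc
        exact Or.inl (Or.inr (⟨hne, by intro t ht; fin_cases t <;> simp_all [Set.mem_insert_iff, Set.mem_singleton_iff]⟩))
      · obtain ⟨⟨za, zb⟩, zc⟩ := bc
        exact Or.inr (⟨hne, by intro t ht; fin_cases t <;> simp_all [Set.mem_insert_iff, Set.mem_singleton_iff]⟩)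
    · rintro (((((((((h|h)|h)|h)|h)|h)|h)|h)|h)|h)
      · obtain ⟨hne, hs⟩ := h
        refine ⟨hne, (cond_iff u).mpr ?_⟩
        have za : u 3 = 0 := hs 3 (by decide)
        have zb : u 4 = 0 := hs 4 (by decide)
        have zc : u 5 = 0 := hs 5 (by decide)
        refine ⟨?_,?_,?_,?_,?_,?_,?_,?_,?_,?_⟩ <;> simp [za, zb, zc]
      · obtain ⟨hne, hs⟩ := h
        refine ⟨hne, (cond_iff u).mpr ?_⟩
        have za : u 0 = 0 := hs 0 (by decide)
        have zb : u 4 = 0 := hs 4 (by decide)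
        have zc : u 5 = 0 := hs 5 (by decide)
        refine ⟨?_,?_,?_,?_,?_,?_,?_,?_,?_,?_⟩ <;> simp [za, zb, zc]
      · obtain ⟨hne, hs⟩ := h
        refine ⟨hne, (cond_iff u).mpr ?_⟩
        have za : u 0 = 0 := hs 0 (by decide)
        have zb : u 1 = 0 := hs 1 (by decide)
        have zc : u 5 = 0 := hs 5 (by decide)
        refine ⟨?_,?_,?_,?_,?_,?_,?_,?_,?_,?_⟩ <;> simp [za, zb, zc]
      · obtain ⟨hne, hs⟩ := h
        refine ⟨hne, (cond_iff u).mpr ?_⟩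
        have za : u 1 = 0 := hs 1 (by decide)
        have zb : u 2 = 0 := hs 2 (by decide)
        have zc : u 5 = 0 := hs 5 (by decide)
        refine ⟨?_,?_,?_,?_,?_,?_,?_,?_,?_,?_⟩ <;> simp [za, zb, zc]
      · obtain ⟨hne, hs⟩ := h
        refine ⟨hne, (cond_iff u).mpr ?_⟩
        have za : u 2 = 0 := hs 2 (by decide)
        have zb : u 3 = 0 := hs 3 (by decide)
        have zc : u 5 = 0 := hs 5 (by decide)
        refine ⟨?_,?_,?_,?_,?_,?_,?_,?_,?_,?_⟩ <;> simp [za, zb, zc]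
      · obtain ⟨hne, hs⟩ := h
        refine ⟨hne, (cond_iff u).mpr ?_⟩
        have za : u 1 = 0 := hs 1 (by decide)
        have zb : u 3 = 0 := hs 3 (by decide)
        have zc : u 4 = 0 := hs 4 (by decide)
        refine ⟨?_,?_,?_,?_,?_,?_,?_,?_,?_,?_⟩ <;> simp [za, zb, zc]
      · obtain ⟨hne, hs⟩ := h
        refine ⟨hne, (cond_iff u).mpr ?_⟩
        have za : u 0 = 0 := hs 0 (by decide)
        have zb : u 2 = 0 := hs 2 (by decide)
        have zc : u 4 = 0 := hs 4 (by decide)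
        refine ⟨?_,?_,?_,?_,?_,?_,?_,?_,?_,?_⟩ <;> simp [za, zb, zc]
      · obtain ⟨hne, hs⟩ := h
        refine ⟨hne, (cond_iff u).mpr ?_⟩
        have za : u 0 = 0 := hs 0 (by decide)
        have zb : u 1 = 0 := hs 1 (by decide)
        have zc : u 3 = 0 := hs 3 (by decide)
        refine ⟨?_,?_,?_,?_,?_,?_,?_,?_,?_,?_⟩ <;> simp [za, zb, zc]
      · obtain ⟨hne, hs⟩ := h
        refine ⟨hne, (cond_iff u).mpr ?_⟩
        have za : u 1 = 0 := hs 1 (by decide)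
        have zb : u 2 = 0 := hs 2 (by decide)
        have zc : u 4 = 0 := hs 4 (by decide)
        refine ⟨?_,?_,?_,?_,?_,?_,?_,?_,?_,?_⟩ <;> simp [za, zb, zc]
      · obtain ⟨hne, hs⟩ := h
        refine ⟨hne, (cond_iff u).mpr ?_⟩
        have za : u 0 = 0 := hs 0 (by decide)
        have zb : u 2 = 0 := hs 2 (by decide)
        have zc : u 3 = 0 := hs 3 (by decide)
        refine ⟨?_,?_,?_,?_,?_,?_,?_,?_,?_,?_⟩ <;> simp [za, zb, zc]
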